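/- Monotone decreasing chain of the values r_j = d^{j−1}((d†)^j(p) − 1): for every p ∈ {0, …, n} and every integer j ≥ 1, if the iterate (d†)^{j+1}(p) is defined and d^j((d†)^{j+1}(p) − 1) is defined, then d^{j−1}((d†)^j(p) − 1) is also defined and d^j((d†)^{j+1}(p) − 1) ≤ d^{j−1}((d†)^j(p) − 1). Consequently, wherever defined, the values r_j = d^{j−1}((d†)^j(p) − 1) are non-increasing in j and satisfy r_j ≤ d†(p) − 1. -/
import Mathlib


/-- `d(p) = max { s j : t j ≤ p }`, with `⊥` meaning "undefined" (i.e. `-∞`). -/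
noncomputable def dvalue (m : ℕ) (s t : ℕ → ℤ) (p : ℤ) : WithBot ℤ :=
  ((Finset.range m).filter (fun j => t j ≤ p)).sup (fun j => (s j : WithBot ℤ))

/-- `d†(p) = min { t j : s j ≥ p }`, with `⊤` meaning "undefined" (i.e. `+∞`). -/
noncomputable def ddual (m : ℕ) (s t : ℕ → ℤ) (p : ℤ) : WithTop ℤ :=
  ((Finset.range m).filter (fun j => p ≤ s j)).inf (fun j => (t j : WithTop ℤ))

/-- The extension of `d` to `WithBot ℤ`, sending `⊥` to `⊥`. -/
noncomputable def dW (m : ℕ) (s t : ℕ → ℤ) : WithBot ℤ → WithBot ℤ :=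
  WithBot.recBotCoe ⊥ (dvalue m s t)

/-- The extension of `d†` to `WithTop ℤ`, sending `⊤` to `⊤`. -/
noncomputable def dtW (m : ℕ) (s t : ℕ → ℤ) : WithTop ℤ → WithTop ℤ :=
  WithTop.recTopCoe ⊤ (ddual m s t)

/-- The (total extension of the) sequence `a_i^{(p)}`:
`a_0 = p`, `a_1 = p - 1`, `a_{i+2} = d(a_i)`.  For `i ≤ l_p` this agrees with the
sequence of the paper. -/
noncomputable def aSeq (m : ℕ) (s t : ℕ → ℤ) (p : ℤ) : ℕ → WithBot ℤ
  | 0 => (p : WithBot ℤ)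
  | 1 => ((p - 1 : ℤ) : WithBot ℤ)
  | i + 2 => dW m s t (aSeq m s t p i)

/-- The length `l_p`: `l_0 = 0`, and for `p ≠ 0` it is the least `j ≥ 1` with
`d(a_{j-1}^{(p)}) = d(a_j^{(p)})` (undefined values compared as `⊥`). -/
noncomputable def lSeq (m : ℕ) (s t : ℕ → ℤ) (p : ℤ) : ℕ :=
  if p = 0 then 0
  else sInf {j : ℕ | 1 ≤ j ∧ dW m s t (aSeq m s t p (j - 1)) = dW m s t (aSeq m s t p j)}

/-- The (total extension of the) dual sequence `a_i^{(p)†}`: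
`a_0 = p`, `a_1 = p + 1`, `a_{i+2} = d†(a_i)`. -/
noncomputable def aSeqD (m : ℕ) (s t : ℕ → ℤ) (p : ℤ) : ℕ → WithTop ℤ
  | 0 => (p : WithTop ℤ)
  | 1 => ((p + 1 : ℤ) : WithTop ℤ)
  | i + 2 => dtW m s t (aSeqD m s t p i)

/-- The dual length `l_p†`: `l_n† = 0`, and for `p ≠ n` it is the least `j ≥ 1` with
`d†(a_{j-1}^{(p)†}) = d†(a_j^{(p)†})` (undefined values compared as `⊤`). -/
noncomputable def lSeqD (n : ℤ) (m : ℕ) (s t : ℕ → ℤ) (p : ℤ) : ℕ :=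
  if p = n then 0
  else sInf {j : ℕ | 1 ≤ j ∧ dtW m s t (aSeqD m s t p (j - 1)) = dtW m s t (aSeqD m s t p j)}

/-- Sends `d†`-values to `d`-inputs: `x ↦ x - 1`, with undefined (`⊤`) mapped to
undefined (`⊥`). -/
noncomputable def shiftDown : WithTop ℤ → WithBot ℤ :=
  WithTop.recTopCoe ⊥ (fun a => ((a - 1 : ℤ) : WithBot ℤ))

lemma dW_mono (m : ℕ) (s t : ℕ → ℤ) : Monotone (dW m s t) := by
  intro x y hxy
  induction x using WithBot.recBotCoe with
  | bot => simp [dW]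
  | coe a =>
    induction y using WithBot.recBotCoe with
    | bot => exact absurd hxy (by simp)
    | coe b =>
      have hab : a ≤ b := WithBot.coe_le_coe.mp hxy
      simp only [dW, WithBot.recBotCoe, dvalue]
      apply Finset.sup_mono
      intro j hj
      simp only [Finset.mem_filter] at hj ⊢
      exact ⟨hj.1, le_trans hj.2 hab⟩

lemma keyL (m : ℕ) (s t : ℕ → ℤ) (x : WithTop ℤ) :
    dW m s t (shiftDown (dtW m s t x)) ≤ shiftDown x := by
  induction x using WithTop.recTopCoe with
  | top => simp [dtW, shiftDown, dW]
  | coe q =>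
    have hdt : dtW m s t (q : WithTop ℤ) = ddual m s t q := rfl
    rw [hdt]
    rcases h : ddual m s t q with _ | r
    · show dW m s t (shiftDown ⊤) ≤ shiftDown ((q : WithTop ℤ))
      have : shiftDown (⊤ : WithTop ℤ) = ⊥ := rfl
      rw [this]
      have : dW m s t ⊥ = ⊥ := rfl
      rw [this]
      exact bot_le
    · show dW m s t (shiftDown ((r : WithTop ℤ))) ≤ shiftDown ((q : WithTop ℤ))
      show dvalue m s t (r - 1) ≤ ((q - 1 : ℤ) : WithBot ℤ)
      rw [dvalue]
      apply Finset.sup_le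
      intro i hi
      simp only [Finset.mem_filter, Finset.mem_range] at hi
      have hsi : s i < q := by
        by_contra hc
        push_neg at hc
        have : ddual m s t q ≤ (t i : WithTop ℤ) := by
          apply Finset.inf_le
          simp [Finset.mem_filter, Finset.mem_range, hi.1, hc]
        rw [h] at this
        have : r ≤ t i := WithTop.coe_le_coe.mp this
        omega
      exact WithBot.coe_le_coe.mpr (by omega)

lemma chain_step (m : ℕ) (s t : ℕ → ℤ) (x : WithTop ℤ) (k : ℕ) :
    (dW m s t)^[k + 1] (shiftDown ((dtW m s t)^[k + 2] x)) ≤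
      (dW m s t)^[k] (shiftDown ((dtW m s t)^[k + 1] x)) := by
  have h1 : (dtW m s t)^[k + 2] x = dtW m s t ((dtW m s t)^[k + 1] x) :=
    Function.iterate_succ_apply' _ _ _
  rw [h1, Function.iterate_succ_apply]
  exact (dW_mono m s t).iterate k (keyL m s t _)

theorem r_chain_antitone
    (n : ℤ) (m : ℕ) (s t : ℕ → ℤ)
    (hn : 0 ≤ n)
    (hsmono : ∀ i j : ℕ, i < j → j < m → s i < s j)
    (htmono : ∀ i j : ℕ, i < j → j < m → t i < t j)
    (hs0 : ∀ j : ℕ, j < m → 0 ≤ s j)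
    (htn : ∀ j : ℕ, j < m → t j ≤ n)
    (hlen : ∀ j : ℕ, j < m → s j + 2 ≤ t j)
    (p : ℤ) (hp0 : 0 ≤ p) (hpn : p ≤ n) :
    (∀ j : ℕ, 1 ≤ j →
      (dtW m s t)^[j + 1] (p : WithTop ℤ) ≠ ⊤ →
      (dW m s t)^[j] (shiftDown ((dtW m s t)^[j + 1] (p : WithTop ℤ))) ≠ ⊥ →
      (dW m s t)^[j - 1] (shiftDown ((dtW m s t)^[j] (p : WithTop ℤ))) ≠ ⊥ ∧
        (dW m s t)^[j] (shiftDown ((dtW m s t)^[j + 1] (p : WithTop ℤ))) ≤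
          (dW m s t)^[j - 1] (shiftDown ((dtW m s t)^[j] (p : WithTop ℤ)))) ∧
    (∀ j : ℕ, 1 ≤ j →
      (dW m s t)^[j - 1] (shiftDown ((dtW m s t)^[j] (p : WithTop ℤ))) ≠ ⊥ →
      (dW m s t)^[j - 1] (shiftDown ((dtW m s t)^[j] (p : WithTop ℤ))) ≤
        shiftDown (ddual m s t p)) := by
  have key : ∀ k : ℕ, (dW m s t)^[k + 1] (shiftDown ((dtW m s t)^[k + 2] (p : WithTop ℤ))) ≤
      (dW m s t)^[k] (shiftDown ((dtW m s t)^[k + 1] (p : WithTop ℤ))) :=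
    fun k => chain_step m s t _ k
  constructor
  · intro j hj _ hne
    obtain ⟨k, rfl⟩ : ∃ k, j = k + 1 := ⟨j - 1, by omega⟩
    simp only [Nat.add_sub_cancel]
    have hle := key k
    refine ⟨fun hb => hne ?_, hle⟩
    rw [hb] at hle
    exact le_bot_iff.mp hle
  · have chain : ∀ k : ℕ, (dW m s t)^[k] (shiftDown ((dtW m s t)^[k + 1] (p : WithTop ℤ))) ≤
        (dW m s t)^[0] (shiftDown ((dtW m s t)^[1] (p : WithTop ℤ))) := by
      intro k
      induction k with
      | zero => exact le_refl _
      | succ k ih => exact le_trans (key k) ih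
    intro j hj _
    obtain ⟨k, rfl⟩ : ∃ k, j = k + 1 := ⟨j - 1, by omega⟩
    simp only [Nat.add_sub_cancel]
    exact chain k
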